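/- Let G be a graph obtained from a graph G' by adding, for each vertex u of G', a set Z_u of k+1 new pendant vertices adjacent only to u. If there exists a partition P of V(G) into connected parts with cost(P) ≤ k such that G/P is 2K_2-free, then the induced partition P' = {S \ Z : S ∈ P} \ {∅} of V(G') makes G'/P' have no induced 2K_1 (i.e., G'/P' is complete). -/

import Mathlib

variable {V W : Type*}

/-- Contraction of a graph by a partition (setoid): two classes are adjacent
iff they are distinct and joined by an edge of `G`. -/
def contractQ (G : SimpleGraph V) (s : Setoid V) : SimpleGraph (Quotient s) where
  Adj x y := x ≠ y ∧ ∃ a b : V, Quotient.mk s a = x ∧ Quotient.mk s b = y ∧ G.Adj a b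
  symm := by
    constructor
    rintro x y ⟨hne, a, b, ha, hb, hab⟩
    exact ⟨hne.symm, b, a, hb, ha, hab.symm⟩
  loopless := by
    constructor
    rintro x ⟨hne, -⟩
    exact hne rfl

/-- The partition of the vertices induced by contracting a set `F` of edges of `G`. -/
def edgeSetoid (G : SimpleGraph V) (F : Set (Sym2 V)) : Setoid V :=
  Relation.EqvGen.setoid (fun a b => G.Adj a b ∧ s(a, b) ∈ F)

/-- The graph `G/F` obtained from `G` by contracting the edges in `F`. -/
def contractE (G : SimpleGraph V) (F : Set (Sym2 V)) :
    SimpleGraph (Quotient (edgeSetoid G F)) := contractQ G (edgeSetoid G F)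

/-- `G` contains an induced copy of `H`. -/
def HasInducedCopy (H : SimpleGraph W) (G : SimpleGraph V) : Prop :=
  ∃ f : W ↪ V, ∀ a b : W, H.Adj a b ↔ G.Adj (f a) (f b)

/-- `G` can be turned into an `H`-free graph by contracting at most `k` of its edges. -/
def ContractsToFree (G : SimpleGraph V) (k : ℕ) (H : SimpleGraph W) : Prop :=
  ∃ F : Finset (Sym2 V), ↑F ⊆ G.edgeSet ∧ F.card ≤ k ∧
    ¬ HasInducedCopy H (contractE G (↑F : Set (Sym2 V)))

/-- The cost of the partition given by a setoid: the sum over classes of (size - 1). -/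
noncomputable def setoidCost (s : Setoid V) : ℕ :=
  ∑ᶠ c : Quotient s, ({v : V | Quotient.mk s v = c}.ncard - 1)

/-- Vertex set after adding `k+1` pendant vertices `Z_u` to each vertex `u` of `G'`. -/
abbrev PendV (V : Type*) (k : ℕ) := V ⊕ (V × Fin (k + 1))

/-- The graph obtained from `G'` by attaching, to each vertex `u`, a set `Z_u` of `k+1`
new pendant vertices adjacent only to `u`. -/
def pendant {V : Type*} (G' : SimpleGraph V) (k : ℕ) : SimpleGraph (PendV V k) :=
  SimpleGraph.fromRel (fun x y =>
    match x, y with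
    | Sum.inl a, Sum.inl b => G'.Adj a b
    | Sum.inl a, Sum.inr (b, _) => a = b
    | _, _ => False)

section Aux

lemma pend_neighbor {G' : SimpleGraph V} {k : ℕ} {u : V} {j : Fin (k+1)} {w}
    (h : (pendant G' k).Adj (Sum.inr (u, j)) w) : w = Sum.inl u := by
  rw [pendant, SimpleGraph.fromRel_adj] at h
  obtain ⟨hne, h | h⟩ := h
  · rcases w with a | ⟨b, j'⟩ <;> simp_all
  · rcases w with a | ⟨b, j'⟩ <;> simp_all

lemma pend_adj_pendant {G' : SimpleGraph V} {k : ℕ} (a : V) (j : Fin (k+1)) :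
    (pendant G' k).Adj (Sum.inr (a, j)) (Sum.inl a) := by
  rw [pendant, SimpleGraph.fromRel_adj]
  exact ⟨by simp, Or.inr rfl⟩

lemma pend_adj_cases {G' : SimpleGraph V} {k : ℕ} {p q}
    (h : (pendant G' k).Adj p q) :
    (∃ a b, p = Sum.inl a ∧ q = Sum.inl b ∧ G'.Adj a b) ∨
    (∃ u j, p = Sum.inl u ∧ q = Sum.inr (u, j)) ∨
    (∃ u j, p = Sum.inr (u, j) ∧ q = Sum.inl u) := by
  rw [pendant, SimpleGraph.fromRel_adj] at h
  obtain ⟨hne, h | h⟩ := h <;> rcases p with a | ⟨a, j⟩ <;> rcases q with b | ⟨b, j'⟩ <;>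
    first | exact Or.inl ⟨a, b, rfl, rfl, h.symm⟩ | aesop

lemma exists_neighbor {α : Type*} {G : SimpleGraph α} {S : Set α}
    (h : (G.induce S).Connected) {v w : α} (hv : v ∈ S) (hw : w ∈ S) (hne : v ≠ w) :
    ∃ u ∈ S, G.Adj v u := by
  obtain ⟨p⟩ := h ⟨v, hv⟩ ⟨w, hw⟩
  cases p with
  | nil => exact absurd rfl hne
  | cons h' p' =>
    rename_i x
    exact ⟨x.1, x.2, h'⟩

lemma class_le_cost {α : Type*} [Finite α] (s : Setoid α) (c : Quotient s) :
    {v | Quotient.mk s v = c}.ncard - 1 ≤ setoidCost s := by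
  have : Finite (Quotient s) := Quotient.finite s
  rw [setoidCost]
  exact single_le_finsum (f := fun c => ({v | Quotient.mk s v = c}.ncard - 1)) c
    (Set.toFinite _) (fun _ => Nat.zero_le _)

lemma pendant_cost_lower {V : Type*} [Fintype V] (k : ℕ) (s : Setoid (PendV V k)) (u : V)
    (h : ∀ j : Fin (k+1), s.r (Sum.inl u) (Sum.inr (u, j))) :
    k + 1 ≤ setoidCost s := by
  classical
  set C : Set (PendV V k) := {v | Quotient.mk s v = Quotient.mk s (Sum.inl u)} with hC
  have hsub : ↑(insert (Sum.inl u) ((Finset.univ : Finset (Fin (k+1))).image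
      fun j => (Sum.inr (u, j) : PendV V k))) ⊆ C := by
    intro x hx
    simp only [Finset.coe_insert, Finset.coe_image, Set.mem_insert_iff] at hx
    rcases hx with rfl | ⟨j, _, rfl⟩
    · exact rfl
    · exact Quotient.sound (s.symm (h j))
  have hcard : (insert (Sum.inl u) ((Finset.univ : Finset (Fin (k+1))).image
      fun j => (Sum.inr (u, j) : PendV V k))).card = k + 2 := by
    rw [Finset.card_insert_of_notMem (by simp), Finset.card_image_of_injective _ (by
      intro a b hab; simpa using hab)]
    simp
  have hle : k + 2 ≤ C.ncard := by
    rw [← hcard, ← Set.ncard_coe_finset]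
    exact Set.ncard_le_ncard hsub (Set.toFinite _)
  have := class_le_cost s (Quotient.mk s (Sum.inl u))
  rw [← hC] at this
  omega

end Aux

/-- If the pendant-augmented graph `G` admits a partition `P` into connected
parts of cost at most `k` whose quotient is `2K_2`-free, then the partition induced on
`V(G')` makes the quotient of `G'` have no induced `2K_1`, i.e. be complete. -/
theorem pendant_2k2_free_implies_complete {V : Type*} [Fintype V]
    (G' : SimpleGraph V) (k : ℕ) (s : Setoid (PendV V k))
    (hconn : ∀ v : PendV V k, ((pendant G' k).induce {u | s.r u v}).Connected)
    (hcost : setoidCost s ≤ k)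
    (hfree : ¬ ∃ a b c d : Quotient s,
      (contractQ (pendant G' k) s).Adj a b ∧ (contractQ (pendant G' k) s).Adj c d ∧
      a ≠ c ∧ a ≠ d ∧ b ≠ c ∧ b ≠ d ∧
      ¬ (contractQ (pendant G' k) s).Adj a c ∧ ¬ (contractQ (pendant G' k) s).Adj a d ∧
      ¬ (contractQ (pendant G' k) s).Adj b c ∧ ¬ (contractQ (pendant G' k) s).Adj b d) :
    ∀ x y : Quotient (Setoid.comap Sum.inl s), x ≠ y →
      (contractQ G' (Setoid.comap Sum.inl s)).Adj x y := by
  classical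
  intro x y hxy
  obtain ⟨a, ha⟩ := Quotient.exists_rep x
  obtain ⟨b, hb⟩ := Quotient.exists_rep y
  have hab : ¬ s.r (Sum.inl a) (Sum.inl b) := by
    intro h
    exact hxy (ha ▸ hb ▸ Quotient.sound h)
  have habne : a ≠ b := fun h => hab (h ▸ Setoid.refl _)
  have hsing : ∀ u : V, ∃ j : Fin (k+1),
      ∀ w, s.r w (Sum.inr (u, j)) → w = Sum.inr (u, j) := by
    intro u
    by_contra hcon
    push_neg at hcon
    have hall : ∀ j : Fin (k+1), s.r (Sum.inl u) (Sum.inr (u, j)) := by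
      intro j
      obtain ⟨w, hw1, hw2⟩ := hcon j
      obtain ⟨n, hn, hadj⟩ :=
        exists_neighbor (hconn (Sum.inr (u, j))) (Setoid.refl _) hw1 (Ne.symm hw2)
      rw [pend_neighbor hadj] at hn
      exact hn
    have := pendant_cost_lower k s u hall
    omega
  obtain ⟨ja, hZa⟩ := hsing a
  obtain ⟨jb, hZb⟩ := hsing b
  by_contra hgoal
  apply hfree
  refine ⟨Quotient.mk s (Sum.inr (a, ja)), Quotient.mk s (Sum.inl a),
          Quotient.mk s (Sum.inr (b, jb)), Quotient.mk s (Sum.inl b),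
          ?_, ?_, ?_, ?_, ?_, ?_, ?_, ?_, ?_, ?_⟩
  · refine ⟨fun h => absurd (hZa _ (Quotient.exact h.symm)) (by simp),
      Sum.inr (a, ja), Sum.inl a, rfl, rfl, pend_adj_pendant a ja⟩
  · refine ⟨fun h => absurd (hZb _ (Quotient.exact h.symm)) (by simp),
      Sum.inr (b, jb), Sum.inl b, rfl, rfl, pend_adj_pendant b jb⟩
  · intro h
    have := hZa _ (Quotient.exact h.symm)
    simp only [Sum.inr.injEq, Prod.mk.injEq] at this
    exact habne this.1.symm
  · intro h
    have := hZa _ (Quotient.exact h.symm)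
    simp at this
  · intro h
    have := hZb _ (Quotient.exact h)
    simp at this
  · intro h
    exact hab (Quotient.exact h)
  · rintro ⟨-, p, q, hp, hq, hadj⟩
    rw [hZa p (Quotient.exact hp), hZb q (Quotient.exact hq)] at hadj
    exact absurd (pend_neighbor hadj) (by simp)
  · rintro ⟨-, p, q, hp, hq, hadj⟩
    rw [hZa p (Quotient.exact hp)] at hadj
    rw [pend_neighbor hadj] at hq
    exact hab (Quotient.exact hq)
  · rintro ⟨-, p, q, hp, hq, hadj⟩
    rw [hZb q (Quotient.exact hq)] at hadj
    rw [pend_neighbor hadj.symm] at hp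
    exact hab (s.symm (Quotient.exact hp))
  · rintro ⟨hne, p, q, hp, hq, hadj⟩
    rcases pend_adj_cases hadj with ⟨a', b', rfl, rfl, hGadj⟩ | ⟨u, j, rfl, rfl⟩ | ⟨u, j, rfl, rfl⟩
    · apply hgoal
      have h1 : s.r (Sum.inl a') (Sum.inl a) := Quotient.exact hp
      have h2 : s.r (Sum.inl b') (Sum.inl b) := Quotient.exact hq
      refine ⟨hxy, a', b', ?_, ?_, hGadj⟩
      · exact (Quotient.sound (show (Setoid.comap Sum.inl s).r a' a from h1)).trans ha
      · exact (Quotient.sound (show (Setoid.comap Sum.inl s).r b' b from h2)).trans hb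
    · have hqB : s.r (Sum.inr (u, j)) (Sum.inl b) := Quotient.exact hq
      obtain ⟨n, hn, hadj2⟩ :=
        exists_neighbor (hconn (Sum.inl b)) hqB (Setoid.refl _) (by simp)
      rw [pend_neighbor hadj2] at hn
      exact hab (s.trans (s.symm (Quotient.exact hp)) hn)
    · have hpA : s.r (Sum.inr (u, j)) (Sum.inl a) := Quotient.exact hp
      obtain ⟨n, hn, hadj2⟩ :=
        exists_neighbor (hconn (Sum.inl a)) hpA (Setoid.refl _) (by simp)
      rw [pend_neighbor hadj2] at hn
      exact hab (s.trans (s.symm hn) (Quotient.exact hq))
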